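/- (Necessary condition for parsimony.) Let (C,T,C₀,⪰) be a target–context category and s : P⊗C₀ → T⊗C₀ a simulator such that every lax reduction r* : s → id is also an oplax reduction (i.e. s∘(r⊗id_{C₀}) ⪰ id_{T⊗C₀} implies id_{T⊗C₀} ⪰ s∘(r⊗id_{C₀})). If s is a compressed universal simulator, then there exists no simulator morphism of type s → id; i.e. the trivial simulator is not more parsimonious than s. -/

import Mathlib

open CategoryTheory MonoidalCategory

universe w v u v' u'

/-- A gs-monoidal category: a symmetric monoidal category in which every object carries a
commutative comonoid structure (copy and discard), compatible with tensor products. -/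
class GSCat (C : Type u) [Category.{v} C] [MonoidalCategory C] [SymmetricCategory C] where
  copy : ∀ A : C, A ⟶ A ⊗ A
  discard : ∀ A : C, A ⟶ 𝟙_ C
  copy_assoc : ∀ A : C, copy A ≫ (copy A ▷ A) ≫ (α_ A A A).hom = copy A ≫ (A ◁ copy A)
  copy_comm : ∀ A : C, copy A ≫ (β_ A A).hom = copy A
  copy_counit_left : ∀ A : C, copy A ≫ (discard A ▷ A) ≫ (λ_ A).hom = 𝟙 A
  copy_counit_right : ∀ A : C, copy A ≫ (A ◁ discard A) ≫ (ρ_ A).hom = 𝟙 A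
  copy_tensor : ∀ A X : C, copy (A ⊗ X) = (copy A ⊗ₘ copy X) ≫ tensorμ A A X X
  discard_tensor : ∀ A X : C, discard (A ⊗ X) = (discard A ⊗ₘ discard X) ≫ (λ_ (𝟙_ C)).hom
  discard_unit : discard (𝟙_ C) = 𝟙 (𝟙_ C)

variable {C : Type u} [Category.{v} C] [MonoidalCategory C] [SymmetricCategory C] [GSCat C]

/-- The domain `dom(f) = ρ_A ∘ (id_A ⊗ (ε_X ∘ f)) ∘ Δ_A` of a morphism `f : A ⟶ X`. -/
def gsDom {A X : C} (f : A ⟶ X) : A ⟶ A :=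
  GSCat.copy A ≫ (A ◁ (f ≫ GSCat.discard X)) ≫ (ρ_ A).hom

/-- A morphism is normalized if `f ∘ dom(f) = f`. -/
def GsNormalized {A X : C} (f : A ⟶ X) : Prop := gsDom f ≫ f = f

/-- A morphism is functional if `Δ_X ∘ f = (f ⊗ f) ∘ Δ_A`. -/
def GsFunctional {A X : C} (f : A ⟶ X) : Prop :=
  f ≫ GSCat.copy X = GSCat.copy A ≫ (f ⊗ₘ f)

/-- A morphism is total if `ε_X ∘ f = ε_A`. -/
def GsTotal {A X : C} (f : A ⟶ X) : Prop := f ≫ GSCat.discard X = GSCat.discard A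

/-- `f ⊒ g` : `f` agrees with `g` on the domain of `g`, i.e. `f ∘ dom(g) = g`. -/
def GsRestrict {A X : C} (f g : A ⟶ X) : Prop := gsDom g ≫ f = g

/-- A gs-monoidal category is normalized if all of its morphisms are normalized. -/
class GsNormalizedCat (C : Type u) [Category.{v} C] [MonoidalCategory C]
    [SymmetricCategory C] [GSCat C] : Prop where
  norm : ∀ {A X : C} (f : A ⟶ X), GsNormalized f

/-- A target--context category: a (normalized) gs-monoidal category with distinguished
objects `T` (targets) and `C0` (contexts) together with an ambient preorder on each
hom-set into `T ⊗ C0`, containing the restriction order and preserved by precomposition. -/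
structure TCC (C : Type u) [Category.{v} C] [MonoidalCategory C] [SymmetricCategory C]
    [GSCat C] (T C0 : C) where
  amb : ∀ {A : C}, (A ⟶ T ⊗ C0) → (A ⟶ T ⊗ C0) → Prop
  amb_refl : ∀ {A : C} (f : A ⟶ T ⊗ C0), amb f f
  amb_trans : ∀ {A : C} {f g h : A ⟶ T ⊗ C0}, amb f g → amb g h → amb f h
  amb_of_restrict : ∀ {A : C} {f g : A ⟶ T ⊗ C0}, GsRestrict f g → amb f g
  amb_precomp : ∀ {A Z : C} {f g : A ⟶ T ⊗ C0} (h : Z ⟶ A), amb f g → amb (h ≫ f) (h ≫ g)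

/-- A simulator: a morphism `s : P ⊗ C0 ⟶ T ⊗ C0` of the form
`s = (s_T ⊗ s_C) ∘ (Δ_P ⊗ id)` with functional compiler `s_T : P ⟶ T` and
context reduction `s_C : P ⊗ C0 ⟶ C0`. -/
structure Simulator {C : Type u} [Category.{v} C] [MonoidalCategory C] [SymmetricCategory C]
    [GSCat C] (T C0 P : C) where
  s : P ⊗ C0 ⟶ T ⊗ C0
  sT : P ⟶ T
  sC : P ⊗ C0 ⟶ C0
  sT_functional : GsFunctional sT
  split : s = (GSCat.copy P ▷ C0) ≫ (α_ P P C0).hom ≫ (sT ⊗ₘ sC)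

/-- A simulator is universal if there is a lax reduction to the trivial simulator:
a functional `r : T ⟶ P` with `s ∘ (r ⊗ id) ⪰ id`. -/
def IsUniversal {T C0 : C} (𝒯 : TCC C T C0) {P : C} (s : Simulator T C0 P) : Prop :=
  ∃ r : T ⟶ P, GsFunctional r ∧ 𝒯.amb ((r ▷ C0) ≫ s.s) (𝟙 (T ⊗ C0))

/-- A processing with programs `P`: a morphism `q : P ⊗ (T ⊗ C0) ⟶ T ⊗ C0` that splits as a
simulator with programs `P ⊗ T` and is behaviorally dominated by discarding `P`. -/
structure Processing {T C0 : C} (𝒯 : TCC C T C0) (P : C) where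
  q : P ⊗ (T ⊗ C0) ⟶ T ⊗ C0
  qT : P ⊗ T ⟶ T
  qC : (P ⊗ T) ⊗ C0 ⟶ C0
  qT_functional : GsFunctional qT
  split : q = (α_ P T C0).inv ≫ (GSCat.copy (P ⊗ T) ▷ C0) ≫
      (α_ (P ⊗ T) (P ⊗ T) C0).hom ≫ (qT ⊗ₘ qC)
  weak : 𝒯.amb ((GSCat.discard P ▷ (T ⊗ C0)) ≫ (λ_ (T ⊗ C0)).hom) q

/-- A simulator morphism `s → s'` : a reduction `r : P' ⟶ P` (giving the pulled-back
simulator `r*s := s ∘ (r ⊗ id)`) together with a processing `q` mapping `r*s` to `s'`,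
i.e. `s' = q ∘ (id ⊗ r*s) ∘ (Δ ⊗ id)`. -/
structure SimMor {T C0 : C} (𝒯 : TCC C T C0) {P P' : C}
    (s : Simulator T C0 P) (s' : Simulator T C0 P') where
  r : P' ⟶ P
  r_functional : GsFunctional r
  proc : Processing 𝒯 P'
  hit : (GSCat.copy P' ▷ C0) ≫ (α_ P' P' C0).hom ≫
      (P' ◁ ((r ▷ C0) ≫ s.s)) ≫ proc.q = s'.s

namespace PAux

open GSCat

/-- pairing through the copy map -/
def pr {Z A B : C} (f : Z ⟶ A) (h : Z ⟶ B) : Z ⟶ A ⊗ B := GSCat.copy Z ≫ (f ⊗ₘ h)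

/-- precomposition with a domain gate -/
def pre {Z : C} (z : Z ⟶ 𝟙_ C) : Z ⟶ Z := GSCat.copy Z ≫ (z ▷ Z) ≫ (λ_ Z).hom

theorem copy_unit : GSCat.copy (𝟙_ C) = (λ_ (𝟙_ C)).inv := by
  have h := GSCat.copy_counit_right (C := C) (𝟙_ C)
  rw [GSCat.discard_unit, MonoidalCategory.whiskerLeft_id, Category.id_comp] at h
  rw [unitors_inv_equal]
  exact (Iso.comp_hom_eq_id (ρ_ (𝟙_ C))).mp h

theorem copy_discard_left (A : C) :
    GSCat.copy A ≫ (GSCat.discard A ▷ A) = (λ_ A).inv :=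
  (Iso.comp_hom_eq_id (λ_ A)).mp (by rw [Category.assoc]; exact GSCat.copy_counit_left A)

theorem func_comp {A B D : C} {f : A ⟶ B} {h : B ⟶ D}
    (hf : GsFunctional f) (hh : GsFunctional h) : GsFunctional (f ≫ h) := by
  unfold GsFunctional at *
  rw [Category.assoc, hh, ← Category.assoc, hf, Category.assoc, tensorHom_comp_tensorHom]

theorem pr_tensor {Z A B A' B' : C} (f : Z ⟶ A) (h : Z ⟶ B) (u : A ⟶ A') (v : B ⟶ B') :
    pr f h ≫ (u ⊗ₘ v) = pr (f ≫ u) (h ≫ v) := by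
  simp [pr, Category.assoc, tensorHom_comp_tensorHom]

theorem comp_tensor_left {X Y A A' B : C} (a : X ⟶ A) (b : A ⟶ A') (k : Y ⟶ B) :
    (a ≫ b) ⊗ₘ k = (a ▷ Y) ≫ (b ⊗ₘ k) := by
  rw [← tensorHom_id a Y, tensorHom_comp_tensorHom, Category.id_comp]

theorem comp_tensor_right {X Y A B B' : C} (k : Y ⟶ A) (a : X ⟶ B) (b : B ⟶ B') :
    k ⊗ₘ (a ≫ b) = (Y ◁ a) ≫ (k ⊗ₘ b) := by
  rw [← id_tensorHom Y a, tensorHom_comp_tensorHom, Category.id_comp]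

theorem pr_wr {Z A B A' : C} (f : Z ⟶ A) (h : Z ⟶ B) (u : A ⟶ A') :
    pr f h ≫ (u ▷ B) = pr (f ≫ u) h := by
  rw [← tensorHom_id, pr_tensor, Category.comp_id]

theorem pr_wl {Z A B B' : C} (f : Z ⟶ A) (h : Z ⟶ B) (v : B ⟶ B') :
    pr f h ≫ (A ◁ v) = pr f (h ≫ v) := by
  rw [← id_tensorHom, pr_tensor, Category.comp_id]

theorem pr_braid {Z A B : C} (f : Z ⟶ A) (h : Z ⟶ B) :
    pr f h ≫ (β_ A B).hom = pr h f := by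
  unfold pr
  rw [Category.assoc, BraidedCategory.braiding_naturality, ← Category.assoc,
    GSCat.copy_comm]

theorem pr_left {Z B : C} (z : Z ⟶ 𝟙_ C) (f : Z ⟶ B) :
    pr z f ≫ (λ_ B).hom = pre z ≫ f := by
  unfold pr pre
  rw [MonoidalCategory.tensorHom_def]
  simp only [Category.assoc]
  rw [leftUnitor_naturality]

theorem pr_right {Z A : C} (f : Z ⟶ A) (z : Z ⟶ 𝟙_ C) :
    pr f z ≫ (ρ_ A).hom = pre z ≫ f := by
  rw [← braiding_leftUnitor, ← Category.assoc, pr_braid, pr_left]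

theorem gsDom_eq_pre {Z W : C} (f : Z ⟶ W) :
    gsDom f = pre (f ≫ GSCat.discard W) := by
  unfold gsDom
  have h : GSCat.copy Z ≫ (Z ◁ (f ≫ GSCat.discard W)) ≫ (ρ_ Z).hom
      = pr (𝟙 Z) (f ≫ GSCat.discard W) ≫ (ρ_ Z).hom := by
    rw [pr, ← id_tensorHom, Category.assoc]
  rw [h, pr_right, Category.comp_id]

theorem pre_discard (Z : C) : pre (GSCat.discard Z) = 𝟙 Z :=
  GSCat.copy_counit_left Z

theorem pre_norm [GsNormalizedCat C] {Z W : C} (f : Z ⟶ W) :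
    pre (f ≫ GSCat.discard W) ≫ f = f := by
  rw [← gsDom_eq_pre]; exact GsNormalizedCat.norm f

theorem copy_pre {Z : C} (z : Z ⟶ 𝟙_ C) :
    GSCat.copy Z ≫ (pre z ▷ Z) = pre z ≫ GSCat.copy Z := by
  unfold pre
  simp only [comp_whiskerRight, Category.assoc]
  have hassoc : (GSCat.copy Z ≫ GSCat.copy Z ▷ Z) =
      (GSCat.copy Z ≫ Z ◁ GSCat.copy Z) ≫ (α_ Z Z Z).inv := by
    rw [Iso.eq_comp_inv, Category.assoc]; exact GSCat.copy_assoc Z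
  have h2 : (α_ Z Z Z).inv ≫ z ▷ Z ▷ Z ≫ (λ_ Z).hom ▷ Z =
      z ▷ (Z ⊗ Z) ≫ (λ_ (Z ⊗ Z)).hom := by
    rw [← associator_inv_naturality_left_assoc, ← leftUnitor_tensor_hom]
  have h3 : (λ_ Z).hom ≫ GSCat.copy Z = 𝟙_ C ◁ GSCat.copy Z ≫ (λ_ (Z ⊗ Z)).hom :=
    (leftUnitor_naturality (GSCat.copy Z)).symm
  rw [← Category.assoc, hassoc, Category.assoc, Category.assoc, h2, h3,
    ← whisker_exchange_assoc]

theorem pre_pr_left {Z A B : C} (z : Z ⟶ 𝟙_ C) (f : Z ⟶ A) (h : Z ⟶ B) :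
    pre z ≫ pr f h = pr (pre z ≫ f) h := by
  have h1 : pr (pre z ≫ f) h = GSCat.copy Z ≫ (pre z ▷ Z) ≫ (f ⊗ₘ h) := by
    simp only [pr]; rw [comp_tensor_left]
  rw [h1, ← Category.assoc, copy_pre]
  simp only [pr, Category.assoc]

theorem pre_pre {Z : C} (z z' : Z ⟶ 𝟙_ C) :
    pre (pre z ≫ z') = pre z ≫ pre z' := by
  have h1 : pre (pre z ≫ z') =
      GSCat.copy Z ≫ (pre z ▷ Z) ≫ (z' ▷ Z) ≫ (λ_ Z).hom := by
    simp only [pre, comp_whiskerRight, Category.assoc]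
  rw [h1, ← Category.assoc, copy_pre]
  simp only [pre, Category.assoc]

theorem gate_comm {Z : C} (z z' : Z ⟶ 𝟙_ C) : pre z ≫ z' = pre z' ≫ z := by
  rw [← pr_left z z', unitors_equal, pr_right]

theorem pre_comm {Z : C} (z z' : Z ⟶ 𝟙_ C) :
    pre z ≫ pre z' = pre z' ≫ pre z := by
  rw [← pre_pre, gate_comm, pre_pre]

theorem pre_pr_right {Z A B : C} (z : Z ⟶ 𝟙_ C) (f : Z ⟶ A) (h : Z ⟶ B) :
    pre z ≫ pr f h = pr f (pre z ≫ h) := by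
  rw [← pr_braid h f, ← Category.assoc, pre_pr_left, pr_braid]

theorem pr_assoc {Z A B D : C} (f : Z ⟶ A) (h : Z ⟶ B) (k : Z ⟶ D) :
    pr (pr f h) k ≫ (α_ A B D).hom = pr f (pr h k) := by
  simp only [pr]
  rw [comp_tensor_left, comp_tensor_right]
  simp only [Category.assoc]
  rw [associator_naturality]
  have hca : (GSCat.copy Z ≫ GSCat.copy Z ▷ Z) ≫ (α_ Z Z Z).hom
      = GSCat.copy Z ≫ Z ◁ GSCat.copy Z := by
    rw [Category.assoc]; exact GSCat.copy_assoc Z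
  rw [← Category.assoc, ← Category.assoc, hca]
  simp [Category.assoc]

theorem pr_assoc_inv {Z A B D : C} (f : Z ⟶ A) (h : Z ⟶ B) (k : Z ⟶ D) :
    pr f (pr h k) ≫ (α_ A B D).inv = pr (pr f h) k := by
  rw [← pr_assoc, Category.assoc, Iso.hom_inv_id, Category.comp_id]

theorem pre_dc {Z : C} (z : Z ⟶ 𝟙_ C) :
    pre z ≫ GSCat.discard Z = z := by
  rw [← pr_left z (GSCat.discard Z), unitors_equal, pr_right, pre_discard,
    Category.id_comp]

theorem pr_discard {Z A B : C} (f : Z ⟶ A) (h : Z ⟶ B) :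
    pr f h ≫ GSCat.discard (A ⊗ B) =
      pre (f ≫ GSCat.discard A) ≫ (h ≫ GSCat.discard B) := by
  rw [GSCat.discard_tensor, ← Category.assoc, pr_tensor, pr_left]

theorem pr_id_id (Z : C) : pr (𝟙 Z) (𝟙 Z) = GSCat.copy Z := by
  simp [pr, id_tensorHom_id]

theorem copy_copy_tensorμ (Z : C) :
    GSCat.copy Z ≫ (GSCat.copy Z ⊗ₘ GSCat.copy Z) ≫ tensorμ Z Z Z Z
      = GSCat.copy Z ≫ (GSCat.copy Z ⊗ₘ GSCat.copy Z) := by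
  have h0 : GSCat.copy Z ≫ (GSCat.copy Z ⊗ₘ GSCat.copy Z)
      = pr (pr (𝟙 Z) (𝟙 Z)) (pr (𝟙 Z) (𝟙 Z)) := by
    rw [pr_id_id]; rfl
  rw [← Category.assoc, h0]
  unfold tensorμ
  rw [← Category.assoc, pr_assoc, ← Category.assoc, pr_wl, pr_assoc_inv,
    ← Category.assoc, pr_wl, pr_wr, pr_braid, ← Category.assoc, pr_wl, pr_assoc,
    pr_assoc_inv]

theorem pr_tensorμ {Z A₁ A₂ B₁ B₂ : C} (f₁ : Z ⟶ A₁) (f₂ : Z ⟶ A₂)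
    (h₁ : Z ⟶ B₁) (h₂ : Z ⟶ B₂) :
    pr (pr f₁ f₂) (pr h₁ h₂) ≫ tensorμ A₁ A₂ B₁ B₂ = pr (pr f₁ h₁) (pr f₂ h₂) := by
  have h0 : pr (pr f₁ f₂) (pr h₁ h₂)
      = GSCat.copy Z ≫ (GSCat.copy Z ⊗ₘ GSCat.copy Z) ≫ ((f₁ ⊗ₘ f₂) ⊗ₘ (h₁ ⊗ₘ h₂)) := by
    rw [pr, pr, pr, tensorHom_comp_tensorHom]
  have h1 : pr (pr f₁ h₁) (pr f₂ h₂)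
      = GSCat.copy Z ≫ (GSCat.copy Z ⊗ₘ GSCat.copy Z) ≫ ((f₁ ⊗ₘ h₁) ⊗ₘ (f₂ ⊗ₘ h₂)) := by
    rw [pr, pr, pr, tensorHom_comp_tensorHom]
  rw [h0, h1]
  slice_lhs 3 4 => rw [tensorμ_natural]
  slice_lhs 1 3 => rw [copy_copy_tensorμ]
  simp [Category.assoc]

theorem pr_functional {Z A B : C} {f : Z ⟶ A} {h : Z ⟶ B}
    (hf : GsFunctional f) (hh : GsFunctional h) : GsFunctional (pr f h) := by
  unfold GsFunctional
  rw [GSCat.copy_tensor, ← Category.assoc, pr_tensor, hf, hh, ← pr, ← pr,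
    pr_tensorμ, pr, pr]

theorem beta_unit : (β_ (𝟙_ C) (𝟙_ C)).hom = 𝟙 ((𝟙_ C) ⊗ (𝟙_ C)) := by
  have h := braiding_rightUnitor (C := C) (𝟙_ C)
  rw [unitors_equal] at h
  exact (cancel_mono (ρ_ (𝟙_ C)).hom).mp (by rw [h, Category.id_comp])

variable (C0 : C)

def p0 : (𝟙_ C) ⊗ C0 ⟶ 𝟙_ C := ((𝟙_ C) ◁ GSCat.discard C0) ≫ (ρ_ (𝟙_ C)).hom

def sst {A : C} (x : 𝟙_ C ⟶ A) : (𝟙_ C) ⊗ C0 ⟶ A := p0 C0 ≫ x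

theorem copy_p0 :
    GSCat.copy ((𝟙_ C) ⊗ C0) ≫ (p0 C0 ▷ ((𝟙_ C) ⊗ C0)) = (λ_ ((𝟙_ C) ⊗ C0)).inv := by
  rw [GSCat.copy_tensor, copy_unit]
  have hnat : tensorμ (𝟙_ C) (𝟙_ C) C0 C0 ≫
        ((((𝟙_ C) ◁ GSCat.discard C0)) ▷ ((𝟙_ C) ⊗ C0))
      = (((𝟙_ C) ⊗ (𝟙_ C)) ◁ (GSCat.discard C0 ▷ C0)) ≫
          tensorμ (𝟙_ C) (𝟙_ C) (𝟙_ C) C0 := by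
    have h := tensorμ_natural (C := C) (𝟙 (𝟙_ C)) (𝟙 (𝟙_ C)) (GSCat.discard C0) (𝟙 C0)
    simp only [id_tensorHom_id, id_tensorHom, tensorHom_id,
      MonoidalCategory.id_whiskerRight] at h
    exact h.symm
  simp only [p0, comp_whiskerRight, Category.assoc]
  rw [reassoc_of% hnat]
  have hcol : ((λ_ (𝟙_ C)).inv ⊗ₘ GSCat.copy C0) ≫
        (((𝟙_ C) ⊗ (𝟙_ C)) ◁ (GSCat.discard C0 ▷ C0))
      = ((λ_ (𝟙_ C)).inv ⊗ₘ (λ_ C0).inv) := by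
    rw [← id_tensorHom, tensorHom_comp_tensorHom, Category.comp_id, copy_discard_left]
  rw [← Category.assoc, hcol]
  unfold tensorμ
  rw [beta_unit]
  monoidal

theorem pr_sst {A B : C} (x : 𝟙_ C ⟶ A) (v : (𝟙_ C) ⊗ C0 ⟶ B) :
    pr (sst C0 x) v = (λ_ ((𝟙_ C) ⊗ C0)).inv ≫ (x ⊗ₘ v) := by
  simp only [pr, sst]
  rw [comp_tensor_left, ← Category.assoc, copy_p0]

theorem trip_eq {A B : C} (x : 𝟙_ C ⟶ A) (v : (𝟙_ C) ⊗ C0 ⟶ B) :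
    (GSCat.copy (𝟙_ C) ▷ C0) ≫ (α_ (𝟙_ C) (𝟙_ C) C0).hom ≫ (x ⊗ₘ v)
      = pr (sst C0 x) v := by
  rw [pr_sst, copy_unit, leftUnitor_tensor_inv, Category.assoc]

theorem wR_eq {A : C} (x : 𝟙_ C ⟶ A) :
    x ▷ C0 = pr (sst C0 x) (λ_ C0).hom := by
  rw [pr_sst, tensorHom_def']
  simp

theorem p0_functional : GsFunctional (p0 C0) := by
  unfold GsFunctional
  rw [copy_unit, MonoidalCategory.tensorHom_def, ← Category.assoc, copy_p0]
  simp

theorem sst_functional {A : C} {x : 𝟙_ C ⟶ A} (hx : GsFunctional x) :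
    GsFunctional (sst C0 x) :=
  func_comp (p0_functional C0) hx

theorem func_eq {Z A : C} {f : Z ⟶ A} (hf : GsFunctional f) :
    f ≫ GSCat.copy A = pr f f := hf

theorem sst_comp {A B : C} (x : 𝟙_ C ⟶ A) (f : A ⟶ B) :
    sst C0 x ≫ f = sst C0 (x ≫ f) := by
  simp [sst]

theorem ct_dc : (λ_ C0).hom ≫ GSCat.discard C0 = GSCat.discard ((𝟙_ C) ⊗ C0) := by
  rw [GSCat.discard_tensor, GSCat.discard_unit]
  simp

end PAux

/-- Necessary condition for parsimony: if every lax reduction `r* : s → id`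
is also oplax, and `s` is a compressed universal simulator (for every lax reduction `r`
there are functional states `t, g : I ⟶ T` compiled to the same target, i.e.
`s_T ∘ r ∘ t = s_T ∘ r ∘ g`, such that `g` does not oplax context-reduce to `t`),
then there is no simulator morphism from `s` to the trivial simulator. -/
theorem parsimony_necessary [GsNormalizedCat C] {T C0 : C} (𝒯 : TCC C T C0) {P : C}
    (s : Simulator T C0 P)
    (hoplax : ∀ r : T ⟶ P, GsFunctional r →
      𝒯.amb ((r ▷ C0) ≫ s.s) (𝟙 (T ⊗ C0)) → 𝒯.amb (𝟙 (T ⊗ C0)) ((r ▷ C0) ≫ s.s))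
    (huniv : IsUniversal 𝒯 s)
    (hcompressed : ∀ r : T ⟶ P, GsFunctional r →
      𝒯.amb ((r ▷ C0) ≫ s.s) (𝟙 (T ⊗ C0)) →
      ∃ t g : 𝟙_ C ⟶ T, GsFunctional t ∧ GsFunctional g ∧
        t ≫ r ≫ s.sT = g ≫ r ≫ s.sT ∧
        ¬ ∃ v : 𝟙_ C ⊗ C0 ⟶ C0,
          𝒯.amb (t ▷ C0)
            ((GSCat.copy (𝟙_ C) ▷ C0) ≫ (α_ (𝟙_ C) (𝟙_ C) C0).hom ≫ (g ⊗ₘ v))) :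
    ∀ triv : Simulator T C0 T, triv.s = 𝟙 (T ⊗ C0) → IsEmpty (SimMor 𝒯 s triv) := by
  intro triv htriv
  refine ⟨fun m => ?_⟩
  obtain ⟨r, rfunc, proc, hit⟩ := m
  obtain ⟨q, qT, qC, qTfunc, qsplit, qweak⟩ := proc
  dsimp only at hit qweak qsplit
  rw [htriv] at hit
  set w : T ⟶ T := r ≫ s.sT with hw
  set u : T ⊗ C0 ⟶ C0 := (r ▷ C0) ≫ s.sC with hu
  set s2 : T ⊗ C0 ⟶ T ⊗ C0 := (r ▷ C0) ≫ s.s with hs2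
  have wfunc : GsFunctional w := PAux.func_comp rfunc s.sT_functional
  -- split of the pulled-back simulator
  have hS2 : s2 = (GSCat.copy T ▷ C0) ≫ (α_ T T C0).hom ≫ (w ⊗ₘ u) := by
    rw [hw, hu, hs2, s.split, ← comp_whiskerRight_assoc, rfunc, comp_whiskerRight,
      Category.assoc, ← tensorHom_id (r ⊗ₘ r) C0, associator_naturality_assoc,
      tensorHom_comp_tensorHom, tensorHom_id]
  -- discarding the program recovers s2 from the hit prefix
  have hproj : (GSCat.copy T ▷ C0) ≫ (α_ T T C0).hom ≫ (T ◁ s2) ≫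
      (GSCat.discard T ▷ (T ⊗ C0)) ≫ (λ_ (T ⊗ C0)).hom = s2 := by
    rw [whisker_exchange_assoc, leftUnitor_naturality, ← associator_naturality_left_assoc,
      leftUnitor_tensor_hom]
    simp only [Category.assoc, Iso.hom_inv_id_assoc]
    rw [← comp_whiskerRight_assoc, ← comp_whiskerRight_assoc]
    have hcc : (GSCat.copy T ≫ GSCat.discard T ▷ T) ≫ (λ_ T).hom = 𝟙 T := by
      rw [Category.assoc]; exact GSCat.copy_counit_left T
    rw [hcc, MonoidalCategory.id_whiskerRight, Category.id_comp]
  -- the reduction r is lax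
  have F2 : 𝒯.amb s2 (𝟙 (T ⊗ C0)) := by
    have h := 𝒯.amb_precomp ((GSCat.copy T ▷ C0) ≫ (α_ T T C0).hom ≫ (T ◁ s2)) qweak
    simp only [Category.assoc] at h
    rw [hproj, hit] at h
    exact h
  have F3 : 𝒯.amb (𝟙 (T ⊗ C0)) s2 := hoplax r rfunc F2
  obtain ⟨t, g, tfunc, gfunc, hcomp, hnot⟩ := hcompressed r rfunc F2
  -- action of s2 on functional states
  have hSIM : ∀ (x : 𝟙_ C ⟶ T), GsFunctional x →
      (x ▷ C0) ≫ s2 = PAux.pr (PAux.sst C0 (x ≫ w)) ((x ▷ C0) ≫ u) := by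
    intro x hx
    conv_lhs => rw [hS2, PAux.wR_eq C0 x, ← Category.assoc, PAux.pr_wr,
      PAux.func_eq (PAux.sst_functional C0 hx), ← Category.assoc, PAux.pr_assoc,
      PAux.pr_tensor, PAux.sst_comp, ← PAux.wR_eq]
  -- copying the program into the hit prefix
  have hCopyfst : ∀ (x : 𝟙_ C ⟶ T), GsFunctional x → ∀ {W : C} (M : T ⊗ (T ⊗ C0) ⟶ W),
      (x ▷ C0) ≫ (GSCat.copy T ▷ C0) ≫ (α_ T T C0).hom ≫ (T ◁ s2) ≫ M
        = PAux.pr (PAux.sst C0 x) ((x ▷ C0) ≫ s2) ≫ M := by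
    intro x hx W M
    conv_lhs => rw [PAux.wR_eq C0 x, ← Category.assoc, PAux.pr_wr,
      PAux.func_eq (PAux.sst_functional C0 hx), ← Category.assoc, PAux.pr_assoc,
      ← Category.assoc, PAux.pr_wl, ← PAux.wR_eq]
  have hHitg : PAux.pr (PAux.sst C0 g) ((g ▷ C0) ≫ s2) ≫ q = g ▷ C0 := by
    have h := congrArg (fun k => (g ▷ C0) ≫ k) hit
    rw [Category.comp_id, hCopyfst g gfunc] at h
    exact h
  set EE : (𝟙_ C) ⊗ C0 ⟶ T ⊗ T :=
    PAux.pr (PAux.sst C0 g) (PAux.sst C0 (g ≫ w)) with hEE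
  have EEfunc : GsFunctional EE :=
    PAux.pr_functional (PAux.sst_functional C0 gfunc)
      (PAux.sst_functional C0 (PAux.func_comp gfunc wfunc))
  have hQ : ∀ v : (𝟙_ C) ⊗ C0 ⟶ C0,
      PAux.pr (PAux.sst C0 g) (PAux.pr (PAux.sst C0 (g ≫ w)) v) ≫ q
        = PAux.pr (EE ≫ qT) (PAux.pr EE v ≫ qC) := by
    intro v
    rw [qsplit]
    conv_lhs => rw [← Category.assoc, PAux.pr_assoc_inv, ← hEE, ← Category.assoc,
      PAux.pr_wr, PAux.func_eq EEfunc, ← Category.assoc, PAux.pr_assoc,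
      PAux.pr_tensor]
  -- the hit equation at the state g, in split form
  have hM : PAux.pr (EE ≫ qT) (PAux.pr EE ((g ▷ C0) ≫ u) ≫ qC)
      = PAux.pr (PAux.sst C0 g) (λ_ C0).hom := by
    rw [← hQ ((g ▷ C0) ≫ u), ← hSIM g gfunc, hHitg, PAux.wR_eq]
  -- the simulation of t processed with program g, in split form
  have hM0 : PAux.pr (PAux.sst C0 g) ((t ▷ C0) ≫ s2) ≫ q
      = PAux.pr (EE ≫ qT) (PAux.pr EE ((t ▷ C0) ≫ u) ≫ qC) := by
    rw [hSIM t tfunc, hcomp, hQ]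
  -- marginal and domain consequences of hM
  have hMARG : PAux.pre ((PAux.pr EE ((g ▷ C0) ≫ u) ≫ qC) ≫ GSCat.discard C0) ≫
      (EE ≫ qT) = PAux.sst C0 g := by
    have h1 : PAux.pr (EE ≫ qT) (PAux.pr EE ((g ▷ C0) ≫ u) ≫ qC) ≫
        (T ◁ GSCat.discard C0) ≫ (ρ_ T).hom
        = PAux.pre ((PAux.pr EE ((g ▷ C0) ≫ u) ≫ qC) ≫ GSCat.discard C0) ≫
          (EE ≫ qT) := by
      rw [← Category.assoc, PAux.pr_wl, PAux.pr_right]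
    have h2 : PAux.pr (PAux.sst C0 g) (λ_ C0).hom ≫
        (T ◁ GSCat.discard C0) ≫ (ρ_ T).hom = PAux.sst C0 g := by
      rw [← Category.assoc, PAux.pr_wl, PAux.ct_dc, PAux.pr_right, PAux.pre_discard,
        Category.id_comp]
    rw [← h1, hM, h2]
  have hDOM : PAux.pre ((EE ≫ qT) ≫ GSCat.discard T) ≫
      ((PAux.pr EE ((g ▷ C0) ≫ u) ≫ qC) ≫ GSCat.discard C0)
      = PAux.sst C0 g ≫ GSCat.discard T := by
    have h1 := congrArg (fun k => k ≫ GSCat.discard (T ⊗ C0)) hM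
    rw [PAux.pr_discard, PAux.pr_discard, PAux.ct_dc, PAux.pre_dc] at h1
    exact h1
  -- the key identity:  gating by the domain of g turns the processed target into g
  have hKEY : PAux.pre (PAux.sst C0 g ≫ GSCat.discard T) ≫ (EE ≫ qT)
      = PAux.sst C0 g := by
    rw [← hDOM, PAux.pre_pre, PAux.pre_comm, Category.assoc, PAux.pre_norm, hMARG]
  -- chain of dominations
  have amb1 : 𝒯.amb (t ▷ C0)
      (PAux.pre (PAux.sst C0 g ≫ GSCat.discard T) ≫ (t ▷ C0)) := by
    apply 𝒯.amb_of_restrict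
    unfold GsRestrict
    rw [PAux.gsDom_eq_pre, Category.assoc]
    have hxd : (t ▷ C0) ≫ GSCat.discard (T ⊗ C0)
        = PAux.sst C0 t ≫ GSCat.discard T := by
      rw [PAux.wR_eq C0 t, PAux.pr_discard, PAux.ct_dc, PAux.pre_dc]
    rw [hxd, PAux.pre_pre, Category.assoc]
    have hinner : PAux.pre (PAux.sst C0 t ≫ GSCat.discard T) ≫ (t ▷ C0)
        = (t ▷ C0) := by
      rw [PAux.wR_eq C0 t, PAux.pre_pr_left, PAux.pre_norm]
    rw [hinner]
  have amb2 := 𝒯.amb_precomp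
    (PAux.pre (PAux.sst C0 g ≫ GSCat.discard T) ≫ (t ▷ C0)) F3
  rw [Category.comp_id] at amb2
  have amb3 := 𝒯.amb_precomp (PAux.pr (PAux.sst C0 g) ((t ▷ C0) ≫ s2)) qweak
  have hldg : PAux.pr (PAux.sst C0 g) ((t ▷ C0) ≫ s2) ≫
      (GSCat.discard T ▷ (T ⊗ C0)) ≫ (λ_ (T ⊗ C0)).hom
      = (PAux.pre (PAux.sst C0 g ≫ GSCat.discard T) ≫ (t ▷ C0)) ≫ s2 := by
    rw [← Category.assoc, PAux.pr_wr, PAux.pr_left, ← Category.assoc]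
  rw [hldg, hM0] at amb3
  have amb4 : 𝒯.amb (PAux.pr (EE ≫ qT) (PAux.pr EE ((t ▷ C0) ≫ u) ≫ qC))
      (PAux.pr (PAux.sst C0 g) (PAux.pr EE ((t ▷ C0) ≫ u) ≫ qC)) := by
    apply 𝒯.amb_of_restrict
    unfold GsRestrict
    rw [PAux.gsDom_eq_pre, PAux.pr_discard, PAux.pre_pre, Category.assoc,
      PAux.pre_pr_right, PAux.pre_norm, PAux.pre_pr_left, hKEY]
  refine hnot ⟨PAux.pr EE ((t ▷ C0) ≫ u) ≫ qC, ?_⟩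
  rw [PAux.trip_eq]
  exact 𝒯.amb_trans amb1 (𝒯.amb_trans amb2 (𝒯.amb_trans amb3 amb4))
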